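/- At the fixed point (x₁*, y₁*) with x₁* = √(γμ(α+d₀)/(d₀(α+γμ))), y₁* = αx₁*/(μ(1+x₁*)), and β = ν = (μ/α²)(√(d₀γμ)+√((α+d₀)(α+γμ)))², the characteristic polynomial F(λ) = λ² + Bλ + C of the Jacobian of W satisfies F(1) = 0, where B = μ + d₀ + α/(1+x₁*)² - 2 and C = 1 - μ - d₀ - α/(1+x₁*)² + μd₀ + (α/(1+x₁*)²)(μ - βy₁*(2γ+y₁*)/(γ+y₁*)²). Hence λ = 1 is an eigenvalue of the Jacobian at (x₁*, y₁*). -/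

import Mathlib

set_option maxHeartbeats 2000000 in
/-- At the fixed point `(x₁*, y₁*)` with `β = ν`, the characteristic polynomial
`F(λ) = λ² + Bλ + C` of the Jacobian of `W` satisfies `F(1) = 0`, i.e. `1` is an
eigenvalue. -/
theorem stmt_10 (α β γ μ d₀ : ℝ)
    (hα : 0 < α) (hβ : 0 < β) (hγ : 0 < γ) (hμ0 : 0 < μ) (hμ1 : μ ≤ 1)
    (hd₀ : 0 < d₀) (hαd : α + d₀ ≤ 1)
    (hβν : β = μ / α ^ 2 *
      (Real.sqrt (d₀ * γ * μ) + Real.sqrt ((α + d₀) * (α + γ * μ))) ^ 2)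
    (x₁ y₁ B C : ℝ)
    (hx₁ : x₁ = Real.sqrt (γ * μ * (α + d₀) / (d₀ * (α + γ * μ))))
    (hy₁ : y₁ = α * x₁ / (μ * (1 + x₁)))
    (hB : B = μ + d₀ + α / (1 + x₁) ^ 2 - 2)
    (hC : C = 1 - μ - d₀ - α / (1 + x₁) ^ 2 + μ * d₀ +
      α / (1 + x₁) ^ 2 * (μ - β * y₁ * (2 * γ + y₁) / (γ + y₁) ^ 2)) :
    (1 : ℝ) ^ 2 + B * 1 + C = 0 := by
  have hαγ : (0:ℝ) < α + γ * μ := by positivity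
  set a := Real.sqrt (d₀ * γ * μ) with ha
  set b := Real.sqrt ((α + d₀) * (α + γ * μ)) with hb
  have ha0 : 0 ≤ a := Real.sqrt_nonneg _
  have hb0 : 0 ≤ b := Real.sqrt_nonneg _
  have ha2 : a ^ 2 = d₀ * γ * μ := Real.sq_sqrt (by positivity)
  have hb2 : b ^ 2 = (α + d₀) * (α + γ * μ) := Real.sq_sqrt (by positivity)
  have hx0 : 0 ≤ x₁ := hx₁ ▸ Real.sqrt_nonneg _
  have hx2 : x₁ ^ 2 * (d₀ * (α + γ * μ)) = γ * μ * (α + d₀) := by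
    rw [hx₁, Real.sq_sqrt (by positivity)]
    field_simp
  have hxx : x₁ * (d₀ * (α + γ * μ)) = a * b := by
    have h1 : (x₁ * (d₀ * (α + γ * μ))) ^ 2 = (a * b) ^ 2 := by
      linear_combination (d₀ * (α + γ * μ)) * hx2 - b ^ 2 * ha2 - (d₀ * γ * μ) * hb2
    have h2 : 0 ≤ x₁ * (d₀ * (α + γ * μ)) := by positivity
    have h3 : 0 ≤ a * b := mul_nonneg ha0 hb0
    have h4 : Real.sqrt ((x₁ * (d₀ * (α + γ * μ))) ^ 2) = Real.sqrt ((a * b) ^ 2) := by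
      rw [h1]
    rwa [Real.sqrt_sq h2, Real.sqrt_sq h3] at h4
  have h1x : (0:ℝ) < 1 + x₁ := by linarith
  have hy0 : 0 ≤ y₁ := by rw [hy₁]; positivity
  have hgy : (0:ℝ) < γ + y₁ := by linarith
  rw [hB, hC, hβν, hy₁]
  field_simp
  linear_combination
    (-(μ * x₁ * (2 * γ * μ * (1 + x₁) + α * x₁))) * ha2 +
    (-(μ * x₁ * (2 * γ * μ * (1 + x₁) + α * x₁))) * hb2 +
    (2 * μ * x₁ * (2 * γ * μ * (1 + x₁) + α * x₁)) * hxx +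
    (-(μ ^ 2 * γ) + μ * (μ * γ + α) * x₁ ^ 2) * hx2
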